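/- arXiv:1905.11546 — 4 statements merged into one kernel-verified Lean document; each statement's English description precedes it below -/
import Mathlib

section
/- For a square matrix A expressible as A = Σ_i s_i Z_i where the s_i are independent real random variables and each Z_i is a fixed rank-one square matrix, the expectation of the determinant equals the determinant of the expectation: E[det(A)] = det(E[A]). -/
open MeasureTheory Matrix

private lemma detRowAlt_zero_of_smul_rows {d : ℕ} (v : Fin d → (Fin d → ℝ)) {j1 j2 : Fin d}
    (hne : j1 ≠ j2) {c : ℝ} (h : v j1 = c • v j2) : Matrix.detRowAlternating v = 0 := by
  have h1 : v = Function.update v j1 (c • v j2) := by rw [← h, Function.update_eq_self]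
  rw [h1, AlternatingMap.map_update_smul,
    AlternatingMap.map_eq_zero_of_eq _ _ (i := j1) (j := j2) ?_ hne, smul_zero]
  rw [Function.update_self, Function.update_of_ne hne.symm]

private lemma rows_dep_of_rank_le_one {d : ℕ} (M : Matrix (Fin d) (Fin d) ℝ) (h : M.rank ≤ 1)
    (j1 j2 : Fin d) : ∃ c : ℝ, M j1 = c • M j2 ∨ M j2 = c • M j1 := by
  have hr := M.rank_eq_finrank_span_row
  set W : Submodule ℝ (Fin d → ℝ) := Submodule.span ℝ (Set.range M) with hW
  have hfr : Module.finrank ℝ W ≤ 1 := by have h' := hr ▸ h; exact h'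
  have hrk : Module.rank ℝ W ≤ 1 := by
    rw [← Module.finrank_eq_rank]
    exact_mod_cast hfr
  obtain ⟨v₀, -, hle⟩ := (rank_submodule_le_one_iff W).1 hrk
  have h1 : M j1 ∈ W := Submodule.subset_span (Set.mem_range_self j1)
  have h2 : M j2 ∈ W := Submodule.subset_span (Set.mem_range_self j2)
  obtain ⟨a, ha⟩ := Submodule.mem_span_singleton.1 (hle h1)
  obtain ⟨b, hb⟩ := Submodule.mem_span_singleton.1 (hle h2)
  by_cases hbz : b = 0
  · exact ⟨0, Or.inr (by rw [← hb, hbz, zero_smul, zero_smul])⟩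
  · refine ⟨a / b, Or.inl ?_⟩
    rw [← ha, ← hb, smul_smul, div_mul_cancel₀ _ hbz]

private lemma integral_finset_prod_indep {Ω : Type*} [MeasurableSpace Ω] (μ : Measure Ω)
    [IsProbabilityMeasure μ] {n : ℕ}
    (s : Fin n → Ω → ℝ) (hmeas : ∀ i, Measurable (s i))
    (hindep : ProbabilityTheory.iIndepFun s μ)
    (hint : ∀ S : Finset (Fin n), Integrable (fun ω => ∏ i ∈ S, s i ω) μ)
    (S : Finset (Fin n)) :
    ∫ ω, ∏ i ∈ S, s i ω ∂μ = ∏ i ∈ S, ∫ ω, s i ω ∂μ := by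
  induction S using Finset.induction with
  | empty => simp
  | @insert i S hi ih =>
    have hIndep := (hindep.indepFun_finsetProd_of_notMem hmeas (s := S) (i := i) hi).symm
    have h1 : Integrable (s i) μ := by simpa using hint {i}
    have h2 : Integrable (∏ j ∈ S, s j) μ := by
      have := hint S
      simpa [Finset.prod_fn] using this
    simp only [Finset.prod_insert hi]
    rw [← ih]
    have := hIndep.integral_mul_eq_mul_integral h1.aestronglyMeasurable h2.aestronglyMeasurable
    have e1 : (s i * ∏ j ∈ S, s j) = (fun ω => s i ω * ∏ j ∈ S, s j ω) := by
      funext ω; simp [Finset.prod_apply]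
    have e2 : (∏ j ∈ S, s j) = (fun ω => ∏ j ∈ S, s j ω) := by
      funext ω; simp [Finset.prod_apply]
    rw [e1, e2] at this
    exact this

private lemma det_sum_smul_expand {n d : ℕ} (Z : Fin n → Matrix (Fin d) (Fin d) ℝ)
    (t : Fin n → ℝ) :
    (∑ i, t i • Z i).det
      = ∑ r : Fin d → Fin n, (∏ j, t (r j)) * (Matrix.detRowAlternating fun j => Z (r j) j) := by
  have h0 : (∑ i, t i • Z i).det
      = Matrix.detRowAlternating (fun j => ∑ i, t i • Z i j) := by
    have : (fun j => ∑ i, t i • Z i j) = fun j => (∑ i, t i • Z i) j := by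
      funext j k; simp [Finset.sum_apply, Matrix.sum_apply]
    rw [this]; rfl
  rw [h0]
  have hsum := (Matrix.detRowAlternating (R := ℝ) (n := Fin d)).toMultilinearMap.map_sum
    (g := fun j i => t i • Z i j)
  simp only [AlternatingMap.coe_multilinearMap] at hsum
  rw [hsum]
  refine Finset.sum_congr rfl fun r _ => ?_
  have := (Matrix.detRowAlternating (R := ℝ) (n := Fin d)).toMultilinearMap.map_smul_univ
    (fun j => t (r j)) (fun j => Z (r j) j)
  simp only [AlternatingMap.coe_multilinearMap] at this
  simpa [smul_eq_mul] using this

/-- Expectation of the determinant of a sum of independently scaled rank-one matrices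
equals the determinant of the expectation. -/
theorem det_expectation_eq {Ω : Type*} [MeasurableSpace Ω] (μ : Measure Ω)
    [IsProbabilityMeasure μ] {n d : ℕ}
    (Z : Fin n → Matrix (Fin d) (Fin d) ℝ) (hZ : ∀ i, (Z i).rank ≤ 1)
    (s : Fin n → Ω → ℝ) (hmeas : ∀ i, Measurable (s i))
    (hindep : ProbabilityTheory.iIndepFun s μ)
    (hint : ∀ S : Finset (Fin n), Integrable (fun ω => ∏ i ∈ S, s i ω) μ) :
    ∫ ω, (∑ i, s i ω • Z i).det ∂μ = (∑ i, (∫ ω, s i ω ∂μ) • Z i).det := by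
  classical
  have hD0 : ∀ r : Fin d → Fin n, ¬ Function.Injective r →
      (Matrix.detRowAlternating fun j => Z (r j) j) = 0 := by
    intro r hr
    rw [Function.not_injective_iff] at hr
    obtain ⟨j1, j2, heq, hne⟩ := hr
    obtain ⟨c, hc | hc⟩ := rows_dep_of_rank_le_one (Z (r j1)) (hZ (r j1)) j1 j2
    · exact detRowAlt_zero_of_smul_rows _ hne (by simp only [← heq]; exact hc)
    · exact detRowAlt_zero_of_smul_rows _ hne.symm (by simp only [← heq]; exact hc)
  have hprodimg : ∀ (r : Fin d → Fin n), Function.Injective r → ∀ (g : Fin n → ℝ),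
      ∏ j, g (r j) = ∏ i ∈ Finset.univ.image r, g i := by
    intro r hr g
    rw [Finset.prod_image (fun x _ y _ h => hr h)]
  have hLHS : (fun ω => (∑ i, s i ω • Z i).det)
      = fun ω => ∑ r : Fin d → Fin n,
        (∏ j, s (r j) ω) * (Matrix.detRowAlternating fun j => Z (r j) j) := by
    funext ω; exact det_sum_smul_expand Z (fun i => s i ω)
  rw [hLHS, integral_finset_sum]
  · rw [det_sum_smul_expand Z (fun i => ∫ ω, s i ω ∂μ)]
    refine Finset.sum_congr rfl fun r _ => ?_
    rw [integral_mul_const]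
    by_cases hr : Function.Injective r
    · congr 1
      have e : (fun ω => ∏ j, s (r j) ω) = fun ω => ∏ i ∈ Finset.univ.image r, s i ω := by
        funext ω; exact hprodimg r hr (fun i => s i ω)
      rw [e, integral_finset_prod_indep μ s hmeas hindep hint,
        ← hprodimg r hr (fun i => ∫ ω, s i ω ∂μ)]
    · rw [hD0 r hr, mul_zero, mul_zero]
  · intro r _
    by_cases hr : Function.Injective r
    · have e : (fun ω => (∏ j, s (r j) ω) * (Matrix.detRowAlternating fun j => Z (r j) j))
          = fun ω => (∏ i ∈ Finset.univ.image r, s i ω)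
            * (Matrix.detRowAlternating fun j => Z (r j) j) := by
        funext ω; rw [hprodimg r hr (fun i => s i ω)]
      rw [e]
      exact (hint _).mul_const _
    · have e : (fun ω => (∏ j, s (r j) ω) * (Matrix.detRowAlternating fun j => Z (r j) j))
          = fun _ => (0 : ℝ) := by
        funext ω; rw [hD0 r hr, mul_zero]
      rw [e]
      exact integrable_const 0
end

section
/- For a square matrix A expressible as A = Σ_i s_i Z_i where the s_i are independent real random variables and each Z_i is a fixed rank-one square matrix, the expectation of the adjugate equals the adjugate of the expectation: E[adj(A)] = adj(E[A]). -/
open MeasureTheory Matrix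

open scoped Matrix.Norms.L2Operator


lemma det_add_smul_vecMulVec {d : ℕ} (C : Matrix (Fin d) (Fin d) ℝ) (w v : Fin d → ℝ) (x : ℝ) :
    (C + x • Matrix.vecMulVec w v).det
      = C.det + x * ∑ k, w k * (C.updateRow k v).det := by
  classical
  have hrows : (C + x • Matrix.vecMulVec w v)
      = Matrix.of ((fun k => (x * w k) • v) + (fun k => C k)) := by
    ext k j
    simp only [Matrix.add_apply, Matrix.smul_apply, Matrix.vecMulVec_apply, Matrix.of_apply,
      Pi.add_apply, Pi.smul_apply, smul_eq_mul]
    ring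
  set F := (Matrix.detRowAlternating : AlternatingMap ℝ (Fin d → ℝ) ℝ (Fin d)) with hF
  have hdet : (C + x • Matrix.vecMulVec w v).det
      = F.toMultilinearMap ((fun k => (x * w k) • v) + (fun k => C k)) := by
    rw [hrows]; rfl
  rw [hdet, F.toMultilinearMap.map_add_univ]
  set m : Finset (Fin d) → (Fin d → Fin d → ℝ) :=
    fun s => s.piecewise (fun _ => v) (fun k => C k) with hm
  have hterm : ∀ s : Finset (Fin d),
      F.toMultilinearMap (s.piecewise (fun k => (x * w k) • v) (fun k => C k))
        = (∏ k ∈ s, (x * w k)) • F.toMultilinearMap (m s) := by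
    intro s
    rw [← F.toMultilinearMap.map_piecewise_smul (fun k => x * w k) (m s) s]
    congr 1
    funext k
    by_cases hk : k ∈ s
    · simp [hm, Finset.piecewise_eq_of_mem _ _ _ hk]
    · simp [hm, Finset.piecewise_eq_of_notMem _ _ _ hk]
  have hzero : ∀ s : Finset (Fin d), 1 < s.card → F.toMultilinearMap (m s) = 0 := by
    intro s hs
    obtain ⟨a, ha, b, hb, hab⟩ := Finset.one_lt_card.mp hs
    exact F.map_eq_zero_of_eq _
      (by simp [hm, Finset.piecewise_eq_of_mem _ _ _ ha, Finset.piecewise_eq_of_mem _ _ _ hb]) hab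
  set A : Finset (Finset (Fin d)) :=
    insert ∅ (Finset.univ.image fun k => ({k} : Finset (Fin d))) with hA
  have hsplit : ∑ s : Finset (Fin d),
      F.toMultilinearMap (s.piecewise (fun k => (x * w k) • v) (fun k => C k))
      = ∑ s ∈ A, F.toMultilinearMap (s.piecewise (fun k => (x * w k) • v) (fun k => C k)) := by
    refine (Finset.sum_subset (Finset.subset_univ A) ?_).symm
    intro s _ hs
    rw [hterm s, hzero s ?_, smul_zero]
    have h0 : s ≠ ∅ := by rintro rfl; exact hs (Finset.mem_insert_self _ _)
    have h1 : s.card ≠ 1 := by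
      intro h
      obtain ⟨a, rfl⟩ := Finset.card_eq_one.mp h
      exact hs (Finset.mem_insert_of_mem (Finset.mem_image.mpr ⟨a, Finset.mem_univ a, rfl⟩))
    have h0' : s.card ≠ 0 := fun h => h0 (Finset.card_eq_zero.mp h)
    omega
  rw [hsplit, hA, Finset.sum_insert (by simp), Finset.sum_image
    (fun a _ b _ h => Finset.singleton_injective h)]
  have hempty : F.toMultilinearMap ((∅ : Finset (Fin d)).piecewise
      (fun k => (x * w k) • v) (fun k => C k)) = C.det := by
    rw [Finset.piecewise_empty]; rfl
  have hsingle : ∀ k : Fin d, F.toMultilinearMap (({k} : Finset (Fin d)).piecewise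
      (fun k => (x * w k) • v) (fun k => C k)) = (x * w k) * (C.updateRow k v).det := by
    intro k
    rw [hterm, Finset.prod_singleton, smul_eq_mul]
    congr 1
    have : m {k} = fun j => (C.updateRow k v) j := by
      funext j
      by_cases hj : j = k
      · subst hj; simp [hm, Finset.piecewise_eq_of_mem, Matrix.updateRow_self]
      · simp only [hm]
        rw [Finset.piecewise_eq_of_notMem _ _ _ (by simpa using hj),
          Matrix.updateRow_ne hj]
    rw [this]; rfl
  rw [hempty]
  congr 1
  rw [Finset.mul_sum]
  exact Finset.sum_congr rfl fun k _ => by rw [hsingle k]; ring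

lemma adjugate_add_smul_vecMulVec {d : ℕ} (B : Matrix (Fin d) (Fin d) ℝ) (u v : Fin d → ℝ)
    (x : ℝ) :
    (B + x • Matrix.vecMulVec u v).adjugate
      = B.adjugate + x • ((B + Matrix.vecMulVec u v).adjugate - B.adjugate) := by
  classical
  have key : ∀ (y : ℝ) (p q : Fin d),
      (B + y • Matrix.vecMulVec u v).adjugate p q
        = (B.updateRow q (Pi.single p 1)).det
          + y * ∑ k, Function.update u q 0 k *
              ((B.updateRow q (Pi.single p 1)).updateRow k v).det := by
    intro y p q
    rw [Matrix.adjugate_apply]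
    have hmat : (B + y • Matrix.vecMulVec u v).updateRow q (Pi.single p 1)
        = B.updateRow q (Pi.single p 1)
          + y • Matrix.vecMulVec (Function.update u q 0) v := by
      ext k j
      by_cases hk : k = q
      · subst hk
        simp [Matrix.updateRow_self, Matrix.vecMulVec_apply]
      · simp [Matrix.updateRow_ne hk, Matrix.vecMulVec_apply, Function.update_of_ne hk]
    rw [hmat, det_add_smul_vecMulVec]
  ext p q
  rw [Matrix.add_apply, Matrix.smul_apply, Matrix.sub_apply, key x p q, Matrix.adjugate_apply B p q]
  have h1 : (B + Matrix.vecMulVec u v).adjugate p q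
      = (B.updateRow q (Pi.single p 1)).det
        + 1 * ∑ k, Function.update u q 0 k *
            ((B.updateRow q (Pi.single p 1)).updateRow k v).det := by
    rw [← key 1 p q, one_smul]
  rw [h1]
  simp only [smul_eq_mul]
  ring


lemma exists_vecMulVec_of_rank_le_one {d : ℕ} (M : Matrix (Fin d) (Fin d) ℝ)
    (h : M.rank ≤ 1) : ∃ u v : Fin d → ℝ, M = Matrix.vecMulVec u v := by
  classical
  rw [M.rank_eq_finrank_span_row] at h
  obtain ⟨v, hv⟩ := (Submodule.finrank_le_one_iff_isPrincipal _).mp h |>.principal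
  have hrow : ∀ k, ∃ c : ℝ, M k = c • v := by
    intro k
    have hk : M k ∈ Submodule.span ℝ (Set.range M.row) :=
      Submodule.subset_span (Set.mem_range_self k)
    rw [hv, Submodule.mem_span_singleton] at hk
    obtain ⟨c, hc⟩ := hk
    exact ⟨c, hc.symm⟩
  choose u hu using hrow
  refine ⟨u, v, ?_⟩
  ext k j
  rw [Matrix.vecMulVec_apply]
  have := congrFun (hu k) j
  simpa using this

lemma multiaffine_expansion {n : ℕ} {M : Type*} [AddCommGroup M] [Module ℝ M]
    (F : Finset (Fin n)) (g : (Fin n → ℝ) → M)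
    (H : ∀ (t : Fin n → ℝ) (i : Fin n) (x : ℝ), g (Function.update t i x)
      = g (Function.update t i 0) + x • (g (Function.update t i 1) - g (Function.update t i 0)))
    (Hdep : ∀ t t' : Fin n → ℝ, (∀ i ∈ F, t i = t' i) → g t = g t') :
    ∃ c : Finset (Fin n) → M, ∀ t, g t = ∑ S ∈ F.powerset, (∏ i ∈ S, t i) • c S := by
  classical
  induction F using Finset.induction_on generalizing g with
  | empty =>
    refine ⟨fun _ => g 0, fun t => ?_⟩
    rw [Finset.powerset_empty, Finset.sum_singleton, Finset.prod_empty, one_smul]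
    exact Hdep t 0 (by simp)
  | insert _ _ ha ih =>
    rename_i a F
    set g0 : (Fin n → ℝ) → M := fun t => g (Function.update t a 0) with hg0
    set g1 : (Fin n → ℝ) → M := fun t => g (Function.update t a 1) with hg1
    have Hy : ∀ y : ℝ, ∀ (t : Fin n → ℝ) (i : Fin n) (x : ℝ),
        g (Function.update (Function.update t i x) a y)
        = g (Function.update (Function.update t i 0) a y)
          + x • (g (Function.update (Function.update t i 1) a y)
            - g (Function.update (Function.update t i 0) a y)) := by
      intro y t i x
      by_cases hia : i = a
      · subst hia
        simp [Function.update_idem]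
      · have h' := H (Function.update t a y) i x
        simpa only [Function.update_comm hia] using h'
    have Hdepy : ∀ y : ℝ, ∀ t t' : Fin n → ℝ, (∀ i ∈ F, t i = t' i) →
        g (Function.update t a y) = g (Function.update t' a y) := by
      intro y t t' h
      refine Hdep _ _ ?_
      intro i hi
      rcases Finset.mem_insert.mp hi with rfl | hiF
      · simp
      · have hne : i ≠ a := fun h' => ha (h' ▸ hiF)
        rw [Function.update_of_ne hne, Function.update_of_ne hne]
        exact h i hiF
    obtain ⟨c0, hc0⟩ := ih g0 (Hy 0) (Hdepy 0)
    obtain ⟨c1, hc1⟩ := ih g1 (Hy 1) (Hdepy 1)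
    refine ⟨fun S => if a ∈ S then c1 (S.erase a) - c0 (S.erase a) else c0 S, fun t => ?_⟩
    rw [Finset.sum_powerset_insert ha]
    have e1 : ∑ S ∈ F.powerset, (∏ i ∈ S, t i) •
        (if a ∈ S then c1 (S.erase a) - c0 (S.erase a) else c0 S)
        = g0 t := by
      rw [hc0 t]
      refine Finset.sum_congr rfl fun S hS => ?_
      have haS : a ∉ S := fun h => ha (Finset.mem_powerset.mp hS h)
      rw [if_neg haS]
    have e2 : ∑ S ∈ F.powerset, (∏ i ∈ insert a S, t i) •
        (if a ∈ insert a S then c1 ((insert a S).erase a) - c0 ((insert a S).erase a)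
          else c0 (insert a S))
        = t a • (g1 t - g0 t) := by
      rw [hc0 t, hc1 t, smul_sub, Finset.smul_sum, Finset.smul_sum, ← Finset.sum_sub_distrib]
      refine Finset.sum_congr rfl fun S hS => ?_
      have haS : a ∉ S := fun h => ha (Finset.mem_powerset.mp hS h)
      rw [if_pos (Finset.mem_insert_self a S), Finset.erase_insert haS,
        Finset.prod_insert haS, mul_smul, smul_sub, smul_sub]
    rw [e1, e2]
    have := H t a (t a)
    rw [Function.update_eq_self] at this
    exact this

lemma integral_finset_prod_eq_prod_integral {Ω : Type*} [MeasurableSpace Ω] (μ : Measure Ω)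
    [IsProbabilityMeasure μ] {n : ℕ} (s : Fin n → Ω → ℝ) (hmeas : ∀ i, Measurable (s i))
    (hindep : ProbabilityTheory.iIndepFun s μ)
    (S : Finset (Fin n)) :
    ∫ ω, ∏ i ∈ S, s i ω ∂μ = ∏ i ∈ S, ∫ ω, s i ω ∂μ := by
  classical
  induction S using Finset.induction_on with
  | empty => simp
  | insert _ _ ha ih =>
    rename_i a S
    have hX : AEStronglyMeasurable (∏ j ∈ S, s j) μ := by
      rw [show (∏ j ∈ S, s j) = fun ω => ∏ j ∈ S, s j ω from by funext ω; simp]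
      exact (Finset.measurable_prod S fun i _ => hmeas i).aestronglyMeasurable
    have h := (hindep.indepFun_finset_prod_of_notMem hmeas ha).integral_mul_eq_mul_integral hX
      (hmeas a).aestronglyMeasurable
    have h1 : (∫ ω, (∏ j ∈ S, s j) ω * s a ω ∂μ)
        = (∫ ω, (∏ j ∈ S, s j) ω ∂μ) * ∫ ω, s a ω ∂μ := h
    simp only [Finset.prod_apply] at h1
    have h2 : (∫ ω, ∏ i ∈ insert a S, s i ω ∂μ) = ∫ ω, (∏ i ∈ S, s i ω) * s a ω ∂μ := by
      congr 1; funext ω; rw [Finset.prod_insert ha]; ring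
    rw [h2, h1, ih, Finset.prod_insert ha]
    ring

/-- Expectation of the adjugate of a sum of independently scaled rank-one matrices
equals the adjugate of the expectation. -/
theorem adjugate_expectation_eq {Ω : Type*} [MeasurableSpace Ω] (μ : Measure Ω)
    [IsProbabilityMeasure μ] {n d : ℕ}
    (Z : Fin n → Matrix (Fin d) (Fin d) ℝ) (hZ : ∀ i, (Z i).rank ≤ 1)
    (s : Fin n → Ω → ℝ) (hmeas : ∀ i, Measurable (s i))
    (hindep : ProbabilityTheory.iIndepFun s μ)
    (hint : ∀ S : Finset (Fin n), Integrable (fun ω => ∏ i ∈ S, s i ω) μ) :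
    ∫ ω, (∑ i, s i ω • Z i).adjugate ∂μ = (∑ i, (∫ ω, s i ω ∂μ) • Z i).adjugate := by
  classical
  choose u v hZ' using fun i => exists_vecMulVec_of_rank_le_one (Z i) (hZ i)
  set g : (Fin n → ℝ) → Matrix (Fin d) (Fin d) ℝ :=
    fun t => (∑ i, t i • Z i).adjugate with hg
  have hsum : ∀ (t : Fin n → ℝ) (i : Fin n) (y : ℝ),
      (∑ j, (Function.update t i y) j • Z j)
        = (∑ j ∈ Finset.univ.erase i, t j • Z j) + y • Z i := by
    intro t i y
    rw [← Finset.add_sum_erase _ _ (Finset.mem_univ i), Function.update_self]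
    rw [add_comm]
    congr 1
    refine Finset.sum_congr rfl fun j hj => ?_
    rw [Function.update_of_ne (Finset.ne_of_mem_erase hj)]
  have H : ∀ (t : Fin n → ℝ) (i : Fin n) (x : ℝ), g (Function.update t i x)
      = g (Function.update t i 0) + x • (g (Function.update t i 1) - g (Function.update t i 0)) := by
    intro t i x
    simp only [hg, hsum t i, zero_smul, add_zero, one_smul]
    rw [hZ' i]
    exact adjugate_add_smul_vecMulVec _ (u i) (v i) x
  have Hdep : ∀ t t' : Fin n → ℝ, (∀ i ∈ (Finset.univ : Finset (Fin n)), t i = t' i) →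
      g t = g t' := by
    intro t t' h
    rw [show t = t' from funext fun i => h i (Finset.mem_univ i)]
  obtain ⟨c, hc⟩ := multiaffine_expansion Finset.univ g H Hdep
  have lhs : ∫ ω, (∑ i, s i ω • Z i).adjugate ∂μ
      = ∑ S ∈ (Finset.univ : Finset (Fin n)).powerset, (∫ ω, ∏ i ∈ S, s i ω ∂μ) • c S := by
    have h1 : (fun ω => (∑ i, s i ω • Z i).adjugate)
        = fun ω => ∑ S ∈ (Finset.univ : Finset (Fin n)).powerset,
            (∏ i ∈ S, s i ω) • c S := by
      funext ω
      exact hc (fun i => s i ω)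
    rw [h1, integral_finset_sum _ fun S _ => (hint S).smul_const (c S)]
    exact Finset.sum_congr rfl fun S _ => integral_smul_const _ _
  rw [lhs]
  have rhs : (∑ i, (∫ ω, s i ω ∂μ) • Z i).adjugate
      = ∑ S ∈ (Finset.univ : Finset (Fin n)).powerset,
          (∏ i ∈ S, ∫ ω, s i ω ∂μ) • c S := hc _
  rw [rhs]
  exact Finset.sum_congr rfl fun S _ => by
    rw [integral_finset_prod_eq_prod_integral μ s hmeas hindep S]
end

section
/- For real p ≥ 2 and 0 < η ≤ 1/4, if a nonnegative random variable X satisfies Pr(X ≥ 1+x) ≤ exp(−ln(1+x) · p/η²) for all x ≥ e−1, then ∫_{e−1}^∞ p x^{p−1} Pr(X ≥ 1+x) dx ≤ p (η²)^p. -/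
open MeasureTheory Set

/-- Tail integral bound: if a nonnegative random variable `X` satisfies
`Pr(X ≥ 1 + x) ≤ exp(-ln(1+x)·p/η²)` for all `x ≥ e - 1`, then
`∫_{e-1}^∞ p x^{p-1} Pr(X ≥ 1+x) dx ≤ p (η²)^p`. -/
theorem tail_integral_bound {Ω : Type*} [MeasurableSpace Ω] (μ : Measure Ω)
    [IsProbabilityMeasure μ] (p η : ℝ) (hp : 2 ≤ p) (hη0 : 0 < η) (hη : η ≤ 1 / 4)
    (X : Ω → ℝ) (hX : ∀ ω, 0 ≤ X ω)
    (htail : ∀ x : ℝ, Real.exp 1 - 1 ≤ x →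
      μ {ω | 1 + x ≤ X ω} ≤ ENNReal.ofReal (Real.exp (-(Real.log (1 + x)) * p / η ^ 2))) :
    ∫ x in Ici (Real.exp 1 - 1),
        p * x ^ (p - 1) * (μ {ω | 1 + x ≤ X ω}).toReal ≤ p * (η ^ 2) ^ p := by
  have hη2 : (0:ℝ) < η ^ 2 := by positivity
  have hη216 : η ^ 2 ≤ 1 / 16 := by nlinarith
  have hinv : 16 ≤ 1 / η ^ 2 := by
    rw [le_div_iff₀ hη2]; linarith
  have hp0 : (0:ℝ) < p := by linarith
  set c : ℝ := Real.exp 1 - 1 with hc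
  have he : (2:ℝ) ≤ Real.exp 1 := by
    have := Real.add_one_le_exp (1:ℝ); linarith
  have hc1 : (1:ℝ) ≤ c := by simp only [hc]; linarith
  set b : ℝ := (p - 1) - p / η ^ 2 with hb
  have hinv' : (16:ℝ) ≤ (η ^ 2)⁻¹ := by rwa [one_div] at hinv
  have h16p : 16 * p ≤ p / η ^ 2 := by
    rw [div_eq_mul_inv]; nlinarith
  have hb1 : b < -1 := by
    simp only [hb]; nlinarith
  -- the dominating function
  set g : ℝ → ℝ := fun x => p * (1 + x) ^ b with hg
  -- integrability of g on Ici c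
  have hMP : MeasurePreserving (fun x : ℝ => x + 1) volume volume :=
    measurePreserving_add_right volume 1
  have hEmb : MeasurableEmbedding (fun x : ℝ => x + 1) := measurableEmbedding_addRight 1
  have hpre : (fun x : ℝ => x + 1) ⁻¹' (Ioi (c + 1)) = Ioi c := by
    ext x; simp [Set.mem_Ioi]
  have hc10 : (0:ℝ) < c + 1 := by linarith
  have hint_rpow : IntegrableOn (fun y : ℝ => y ^ b) (Ioi (c + 1)) :=
    integrableOn_Ioi_rpow_of_lt hb1 hc10
  have hMPr : MeasurePreserving (fun x : ℝ => x + 1)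
      (volume.restrict (Ioi c)) (volume.restrict (Ioi (c + 1))) := by
    have := hMP.restrict_preimage_emb hEmb (Ioi (c + 1))
    rwa [hpre] at this
  have hgIoi : IntegrableOn (fun x : ℝ => (1 + x) ^ b) (Ioi c) := by
    have := (hMPr.integrable_comp_emb hEmb (g := fun y : ℝ => y ^ b)).mpr hint_rpow
    have heq : ((fun y : ℝ => y ^ b) ∘ fun x => x + 1) = fun x : ℝ => (1 + x) ^ b := by
      ext x; simp [add_comm]
    rwa [heq] at this
  have hgint : IntegrableOn g (Ici c) := by
    rw [IntegrableOn, Measure.restrict_congr_set Ioi_ae_eq_Ici.symm]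
    exact (hgIoi.const_mul p)
  -- measurability of the tail probability
  have hF : Antitone (fun x : ℝ => (μ {ω | 1 + x ≤ X ω}).toReal) := by
    intro x y hxy
    apply ENNReal.toReal_mono (measure_ne_top μ _)
    apply measure_mono
    intro ω hω
    simp only [Set.mem_setOf_eq] at *
    linarith
  -- pointwise bound on Ici c
  have hbound : ∀ x ∈ Ici c, p * x ^ (p - 1) * (μ {ω | 1 + x ≤ X ω}).toReal ≤ g x := by
    intro x hx
    have hxc : c ≤ x := hx
    have hx0 : (0:ℝ) < x := by linarith
    have h1x : (0:ℝ) < 1 + x := by linarith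
    have htoReal : (μ {ω | 1 + x ≤ X ω}).toReal ≤ Real.exp (-(Real.log (1 + x)) * p / η ^ 2) := by
      have := htail x hxc
      calc (μ {ω | 1 + x ≤ X ω}).toReal
          ≤ (ENNReal.ofReal (Real.exp (-(Real.log (1 + x)) * p / η ^ 2))).toReal :=
            ENNReal.toReal_mono ENNReal.ofReal_ne_top this
        _ = Real.exp (-(Real.log (1 + x)) * p / η ^ 2) :=
            ENNReal.toReal_ofReal (Real.exp_nonneg _)
    have hexp_eq : Real.exp (-(Real.log (1 + x)) * p / η ^ 2) = (1 + x) ^ (-(p / η ^ 2)) := by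
      rw [Real.rpow_def_of_pos h1x]
      ring_nf
    have hxpow : x ^ (p - 1) ≤ (1 + x) ^ (p - 1) :=
      Real.rpow_le_rpow hx0.le (by linarith) (by linarith)
    calc p * x ^ (p - 1) * (μ {ω | 1 + x ≤ X ω}).toReal
        ≤ p * (1 + x) ^ (p - 1) * ((1 + x) ^ (-(p / η ^ 2))) := by
          rw [hexp_eq] at htoReal
          apply mul_le_mul
          · exact mul_le_mul_of_nonneg_left hxpow hp0.le
          · exact htoReal
          · exact ENNReal.toReal_nonneg
          · positivity
      _ = g x := by
          simp only [hg, mul_assoc]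
          rw [← Real.rpow_add h1x]
          rw [hb]
          ring_nf
  -- integrability of f
  have hfmeas : Measurable (fun x : ℝ => p * x ^ (p - 1) * (μ {ω | 1 + x ≤ X ω}).toReal) := by
    exact ((measurable_id.pow_const _).const_mul p).mul hF.measurable
  have hfint : IntegrableOn
      (fun x : ℝ => p * x ^ (p - 1) * (μ {ω | 1 + x ≤ X ω}).toReal) (Ici c) := by
    apply Integrable.mono' hgint (hfmeas.aestronglyMeasurable.restrict)
    refine (ae_restrict_iff' measurableSet_Ici).mpr (Filter.Eventually.of_forall fun x hx => ?_)
    have hx0 : (0:ℝ) < x := lt_of_lt_of_le (by linarith) hx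
    rw [Real.norm_eq_abs, abs_of_nonneg (by positivity)]
    exact hbound x hx
  -- compare integrals
  have hmono : ∫ x in Ici c, p * x ^ (p - 1) * (μ {ω | 1 + x ≤ X ω}).toReal
      ≤ ∫ x in Ici c, g x :=
    setIntegral_mono_on hfint hgint measurableSet_Ici hbound
  -- compute the integral of g
  have hval : ∫ x in Ici c, g x = p * (-(c + 1) ^ (b + 1) / (b + 1)) := by
    rw [MeasureTheory.setIntegral_congr_set Ioi_ae_eq_Ici.symm]
    have : ∫ x in Ioi c, g x = p * ∫ x in Ioi c, (1 + x) ^ b := by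
      simp only [hg]
      exact integral_const_mul p _
    rw [this]
    congr 1
    have him := hMP.setIntegral_preimage_emb hEmb (fun y : ℝ => y ^ b) (Ioi (c + 1))
    rw [hpre] at him
    rw [← integral_Ioi_rpow_of_lt hb1 hc10, ← him]
    apply setIntegral_congr_fun measurableSet_Ioi
    intro x _
    simp [add_comm]
  rw [hval] at hmono
  refine le_trans hmono ?_
  apply mul_le_mul_of_nonneg_left _ hp0.le
  -- remaining: -(c+1)^(b+1)/(b+1) ≤ (η^2)^p
  have hcexp : c + 1 = Real.exp 1 := by simp [hc]
  have hnb : 1 ≤ -(b + 1) := by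
    simp only [hb]; nlinarith
  have hpow : (c + 1) ^ (b + 1) = Real.exp (b + 1) := by
    rw [hcexp, Real.exp_one_rpow]
  have hexp_le : Real.exp (b + 1) ≤ (η ^ 2) ^ p := by
    rw [Real.rpow_def_of_pos hη2, Real.exp_le_exp]
    have hlog : Real.log η⁻¹ ≤ η⁻¹ - 1 :=
      Real.log_le_sub_one_of_pos (by positivity)
    have hlog2 : Real.log (η ^ 2) = 2 * Real.log η := by
      rw [Real.log_pow]; push_cast; ring
    have hlogeta : Real.log η = -Real.log η⁻¹ := by
      rw [Real.log_inv]; ring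
    have key : 1 - 1 / η ^ 2 ≤ 2 * Real.log η := by
      rw [hlogeta]
      have hsq : (0:ℝ) ≤ (1 - η⁻¹) ^ 2 := sq_nonneg _
      have : 1 / η ^ 2 = η⁻¹ ^ 2 := by
        rw [one_div, ← inv_pow]
      nlinarith
    have hb1eq : b + 1 = p * (1 - 1 / η ^ 2) := by
      simp only [hb]; field_simp; ring
    rw [hb1eq, hlog2]
    nlinarith [mul_le_mul_of_nonneg_left key hp0.le]
  calc -(c + 1) ^ (b + 1) / (b + 1) = (c + 1) ^ (b + 1) / (-(b + 1)) := by rw [neg_div, div_neg]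
    _ ≤ (c + 1) ^ (b + 1) := by
        apply div_le_self _ hnb
        rw [hpow]; exact Real.exp_nonneg _
    _ ≤ (η ^ 2) ^ p := by rw [hpow]; exact hexp_le
end

section
/- Let A be a symmetric matrix whose eigenvalues all lie in [1−δ, 1+δ] for some 0 ≤ δ < 1, and suppose δ² ≤ 1/d·s and tr(I − A) ≤ τ. Then the smallest eigenvalue of adj(A) satisfies λ_min(adj(A)) ≥ det(A)/(1+δ) ≥ (1−δ)(1−dδ²)(1−τ). -/
open Matrix

/-- Adjugate of a matrix conjugated by a unitary. -/
lemma adjugate_unitary_conj {d : ℕ} (U D : Matrix (Fin d) (Fin d) ℝ)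
    (hU : U ∈ Matrix.unitaryGroup (Fin d) ℝ) :
    (U * D * star U).adjugate = U * D.adjugate * star U := by
  have hUU : U * star U = 1 := (Matrix.mem_unitaryGroup_iff).mp hU
  have hU'U : star U * U = 1 := (Matrix.mem_unitaryGroup_iff').mp hU
  have hUdet : U.det * (star U).det = 1 := by
    rw [← Matrix.det_mul, hUU, Matrix.det_one]
  have hUinv : U⁻¹ = star U := Matrix.inv_eq_right_inv hUU
  have hU'inv : (star U)⁻¹ = U := Matrix.inv_eq_right_inv hU'U
  have hUu : IsUnit U.det := IsUnit.of_mul_eq_one _ hUdet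
  have hU'u : IsUnit (star U).det := IsUnit.of_mul_eq_one _ (by rwa [mul_comm] at hUdet)
  have hadjU : U.adjugate = U.det • star U := by
    have := Matrix.mul_adjugate U
    calc U.adjugate = (star U * U) * U.adjugate := by rw [hU'U, one_mul]
    _ = star U * (U * U.adjugate) := by rw [mul_assoc]
    _ = star U * (U.det • 1) := by rw [Matrix.mul_adjugate]
    _ = U.det • star U := by rw [Matrix.mul_smul, mul_one]
  have hadjU' : (star U).adjugate = (star U).det • U := by
    calc (star U).adjugate = (U * star U) * (star U).adjugate := by rw [hUU, one_mul]
    _ = U * (star U * (star U).adjugate) := by rw [mul_assoc]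
    _ = U * ((star U).det • 1) := by rw [Matrix.mul_adjugate]
    _ = (star U).det • U := by rw [Matrix.mul_smul, mul_one]
  simp only [Matrix.adjugate_mul_distrib, hadjU, hadjU', Matrix.smul_mul, Matrix.mul_smul,
    smul_smul, mul_assoc]
  rw [hUdet, one_smul]

/-- If the eigenvalues of a symmetric matrix `A` lie in `[1-δ, 1+δ]` with `0 ≤ δ < 1` and
`δ² ≤ 1/d`, and `τ = tr(I - A)`, then
`λ_min(adj A) ≥ det A / (1+δ) ≥ (1-δ)(1-dδ²)(1-τ)`. -/
theorem adjugate_lower_bound {d : ℕ} (A : Matrix (Fin d) (Fin d) ℝ)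
    (hA : A.IsHermitian) (δ τ : ℝ) (hδ0 : 0 ≤ δ) (hδ1 : δ < 1)
    (hδd : δ ^ 2 ≤ 1 / d)
    (heig : ∀ i, 1 - δ ≤ hA.eigenvalues i ∧ hA.eigenvalues i ≤ 1 + δ)
    (hτ : τ = ((1 : Matrix (Fin d) (Fin d) ℝ) - A).trace) :
    (A.adjugate - (A.det / (1 + δ)) • (1 : Matrix (Fin d) (Fin d) ℝ)).PosSemidef ∧
    (1 - δ) * (1 - d * δ ^ 2) * (1 - τ) ≤ A.det / (1 + δ) := by
  set v := hA.eigenvalues with hv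
  have hδ1' : 0 < 1 + δ := by linarith
  have hvpos : ∀ i, 0 < v i := fun i => lt_of_lt_of_le (by linarith) (heig i).1
  have hdet : A.det = ∏ i, v i := by
    simpa [RCLike.ofReal_real_eq_id] using hA.det_eq_prod_eigenvalues
  have hdetpos : 0 < A.det := by
    rw [hdet]; exact Finset.prod_pos fun i _ => hvpos i
  set U : Matrix (Fin d) (Fin d) ℝ := (hA.eigenvectorUnitary : Matrix (Fin d) (Fin d) ℝ)
    with hU
  have hspec : A = U * Matrix.diagonal v * star U := by
    have := hA.spectral_theorem
    simpa [RCLike.ofReal_real_eq_id, Function.comp] using this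
  have hUmem : U ∈ Matrix.unitaryGroup (Fin d) ℝ := hA.eigenvectorUnitary.2
  have hU'U : star U * U = 1 := (Matrix.mem_unitaryGroup_iff').mp hUmem
  -- trace
  have htrace : A.trace = ∑ i, v i := by
    conv_lhs => rw [hspec]
    rw [Matrix.trace_mul_cycle, hU'U, one_mul, Matrix.trace_diagonal]
  have hτ' : τ = ∑ i, (1 - v i) := by
    rw [hτ, Matrix.trace_sub, Matrix.trace_one, htrace, Finset.sum_sub_distrib]
    simp [Finset.card_univ]
  -- PosSemidef part
  constructor
  · have hadj : A.adjugate = U * (Matrix.diagonal v).adjugate * star U := by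
      rw [hspec]; exact adjugate_unitary_conj U _ hUmem
    have hone : (1 : Matrix (Fin d) (Fin d) ℝ) = U * 1 * star U := by
      rw [mul_one, Matrix.mem_unitaryGroup_iff.mp hUmem]
    have key : A.adjugate - (A.det / (1 + δ)) • (1 : Matrix (Fin d) (Fin d) ℝ)
        = U * ((Matrix.diagonal v).adjugate - (A.det / (1 + δ)) • 1) * star U := by
      rw [Matrix.mul_sub, Matrix.sub_mul, hadj]
      congr 1
      rw [Matrix.mul_smul, Matrix.smul_mul, ← hone]
    have hsm : (A.det / (1 + δ)) • (1 : Matrix (Fin d) (Fin d) ℝ)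
        = Matrix.diagonal (fun _ => A.det / (1 + δ)) := by
      ext i j
      by_cases h : i = j <;> simp [Matrix.one_apply, Matrix.diagonal, h]
    have hdiag : (Matrix.diagonal fun i => ∏ j ∈ Finset.univ.erase i, v j)
        - Matrix.diagonal (fun _ => A.det / (1 + δ))
        = Matrix.diagonal (fun i => (∏ j ∈ Finset.univ.erase i, v j) - A.det / (1 + δ)) := by
      ext i j
      by_cases h : i = j <;> simp [Matrix.diagonal, h]
    rw [key, Matrix.adjugate_diagonal, hsm, hdiag, Matrix.star_eq_conjTranspose]
    refine Matrix.PosSemidef.mul_mul_conjTranspose_same ?_ U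
    refine Matrix.posSemidef_diagonal_iff.mpr fun i => ?_
    have hprod : v i * ∏ j ∈ Finset.univ.erase i, v j = A.det := by
      rw [hdet, ← Finset.prod_erase_mul Finset.univ v (Finset.mem_univ i), mul_comm]
    have hle : A.det / (1 + δ) ≤ ∏ j ∈ Finset.univ.erase i, v j := by
      rw [div_le_iff₀ hδ1']
      calc A.det = (∏ j ∈ Finset.univ.erase i, v j) * v i := by rw [mul_comm] at hprod; exact hprod.symm
      _ ≤ (∏ j ∈ Finset.univ.erase i, v j) * (1 + δ) := by
          refine mul_le_mul_of_nonneg_left (heig i).2 ?_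
          exact le_of_lt (Finset.prod_pos fun j _ => hvpos j)
    simpa using sub_nonneg.mpr hle
  -- numerical bound
  · have hdd : (d : ℝ) * δ ^ 2 ≤ 1 := by
      rcases Nat.eq_zero_or_pos d with h | h
      · simp [h]
      · have hd0 : (0 : ℝ) < d := by exact_mod_cast h
        calc (d : ℝ) * δ ^ 2 ≤ (d : ℝ) * (1 / d) := by
              exact mul_le_mul_of_nonneg_left hδd (le_of_lt hd0)
        _ = 1 := by field_simp
    -- each eigenvalue: 1 - δ² ≤ v i * exp (1 - v i)
    have hkey : ∀ i, 1 - δ ^ 2 ≤ v i * Real.exp (1 - v i) := by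
      intro i
      have h1 := (heig i).1
      have h2 := (heig i).2
      have hexp : (1 - v i) + 1 ≤ Real.exp (1 - v i) := Real.add_one_le_exp _
      have hvp := hvpos i
      nlinarith [hexp, hvp, h1, h2]
    have hprodle : (1 - δ ^ 2) ^ d ≤ A.det * Real.exp τ := by
      have : (1 - δ ^ 2) ^ d = ∏ _i : Fin d, (1 - δ ^ 2) := by
        simp [Finset.card_univ]
      rw [this]
      have h2 : ∏ _i : Fin d, (1 - δ ^ 2) ≤ ∏ i, v i * Real.exp (1 - v i) := by
        refine Finset.prod_le_prod (fun i _ => by nlinarith) fun i _ => hkey i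
      calc (∏ _i : Fin d, (1 - δ ^ 2)) ≤ ∏ i, v i * Real.exp (1 - v i) := h2
      _ = (∏ i, v i) * ∏ i, Real.exp (1 - v i) := Finset.prod_mul_distrib
      _ = A.det * Real.exp τ := by rw [← hdet, ← Real.exp_sum, ← hτ']
    have hbern : 1 - (d : ℝ) * δ ^ 2 ≤ (1 - δ ^ 2) ^ d := by
      have := one_add_mul_le_pow (a := -(δ ^ 2)) (by nlinarith) d
      calc 1 - (d : ℝ) * δ ^ 2 = 1 + d * (-(δ ^ 2)) := by ring
      _ ≤ (1 + -(δ ^ 2)) ^ d := this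
      _ = (1 - δ ^ 2) ^ d := by ring_nf
    have hexpτ : 1 - τ ≤ Real.exp (-τ) := by
      have := Real.add_one_le_exp (-τ); linarith
    have hdet2 : (1 - (d : ℝ) * δ ^ 2) * (1 - τ) ≤ A.det := by
      have h3 : 1 - (d : ℝ) * δ ^ 2 ≤ A.det * Real.exp τ := le_trans hbern hprodle
      have hτpos : 0 < Real.exp τ := Real.exp_pos τ
      have h4 : (1 - (d : ℝ) * δ ^ 2) * Real.exp (-τ) ≤ A.det := by
        have h5 := mul_le_mul_of_nonneg_right h3 (Real.exp_pos (-τ)).le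
        rw [mul_assoc, ← Real.exp_add] at h5
        simpa using h5
      calc (1 - (d : ℝ) * δ ^ 2) * (1 - τ) ≤ (1 - (d : ℝ) * δ ^ 2) * Real.exp (-τ) := by
            exact mul_le_mul_of_nonneg_left hexpτ (by linarith)
      _ ≤ A.det := h4
    rw [le_div_iff₀ hδ1']
    rcases le_or_gt 0 ((1 - (d : ℝ) * δ ^ 2) * (1 - τ)) with hX | hX
    · nlinarith [mul_nonneg (sq_nonneg δ) hX, hdet2]
    · have h6 : (1 - δ) * (1 + δ) * ((1 - (d : ℝ) * δ ^ 2) * (1 - τ)) ≤ 0 :=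
        mul_nonpos_of_nonneg_of_nonpos (by nlinarith) hX.le
      nlinarith [hdetpos.le, h6]
end
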